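/- Let H be a real symmetric d×d matrix and g ∈ ℝ^d a nonzero vector having at least one positive and at least one negative g-relevant eigenvalue, and let g* be the grade of g with respect to H. Let λ₁ > 0 be the largest g-relevant eigenvalue and λ_j < 0 a negative g-relevant eigenvalue; set κ_j = λ₁/(−λ_j), and let ν_j = ‖Qg‖²/‖g‖², where Q is the orthogonal projection onto the sum of the eigenspaces of H corresponding to g-relevant eigenvalues λ with λ ≤ λ_j. Define T_j = max{⌈(√(κ_j + 1)/4)·log(4(κ_j + 1)(1 − ν_j)/ν_j) + 1⌉, 1}. Then for t = min{T_j, g*}, the Krylov subspace K_t(H,g) contains a nonzero vector z with ⟨z, Hz⟩ ≤ 0. -/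

import Mathlib

open Matrix

/-- The Krylov subspace of degree `t`: span of `g, Hg, …, H^{t-1} g`. -/
noncomputable def Krylov {d : ℕ} (H : Matrix (Fin d) (Fin d) ℝ) (g : Fin d → ℝ) (t : ℕ) :
    Submodule ℝ (Fin d → ℝ) :=
  Submodule.span ℝ ((fun i : ℕ => (H ^ i) *ᵥ g) '' Set.Iio t)

/-- The full Krylov space: span of `{H^i g : i ≥ 0}`. -/
noncomputable def KrylovFull {d : ℕ} (H : Matrix (Fin d) (Fin d) ℝ) (g : Fin d → ℝ) :
    Submodule ℝ (Fin d → ℝ) :=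
  Submodule.span ℝ (Set.range fun i : ℕ => (H ^ i) *ᵥ g)

/-- `lam` is a `g`-relevant eigenvalue of `H`: `g` is not orthogonal to `ker (H - lam I)`. -/
def gRelevant {d : ℕ} (H : Matrix (Fin d) (Fin d) ℝ) (g : Fin d → ℝ) (lam : ℝ) : Prop :=
  ∃ v : Fin d → ℝ, H *ᵥ v = lam • v ∧ v ⬝ᵥ g ≠ 0

/-- The Euclidean norm of a vector. -/
noncomputable def vnorm {d : ℕ} (x : Fin d → ℝ) : ℝ := Real.sqrt (x ⬝ᵥ x)

open Polynomial

namespace NPCAux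

lemma exp_aux {y : ℝ} (hy : 0 ≤ y) : (2 - y) * Real.exp y ≤ 2 + y := by
  have key : ∀ t : ℝ, 0 ≤ t → 2 ≤ (2 + t) * Real.exp (-t) + t := by
    intro t ht
    have hder : ∀ x : ℝ, HasDerivAt (fun s : ℝ => (2 + s) * Real.exp (-s) + s)
        (1 - (1 + x) * Real.exp (-x)) x := by
      intro x
      have h1 : HasDerivAt (fun s : ℝ => -s) (-1) x := (hasDerivAt_id x).neg
      have h2 : HasDerivAt (fun s : ℝ => Real.exp (-s)) (Real.exp (-x) * (-1)) x :=
        (Real.hasDerivAt_exp (-x)).comp x h1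
      have h3 : HasDerivAt (fun s : ℝ => 2 + s) 1 x := by
        simpa using (hasDerivAt_id x).const_add 2
      have h4 : HasDerivAt (fun s : ℝ => (2 + s) * Real.exp (-s) + s)
          (1 * Real.exp (-x) + (2 + x) * (Real.exp (-x) * -1) + 1) x :=
        (h3.mul h2).add (hasDerivAt_id x)
      convert h4 using 1
      ring
    have hmono : MonotoneOn (fun s : ℝ => (2 + s) * Real.exp (-s) + s) (Set.Ici 0) := by
      apply monotoneOn_of_deriv_nonneg (convex_Ici 0)
      · exact ((continuous_const.add continuous_id).mul
          (Real.continuous_exp.comp continuous_neg)).add continuous_id |>.continuousOn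
      · intro x _
        exact ((hder x).differentiableAt).differentiableWithinAt
      · intro x hx
        rw [interior_Ici] at hx
        rw [(hder x).deriv]
        have : (1 + x) * Real.exp (-x) ≤ 1 := by
          have h5 : 1 + x ≤ Real.exp x := by linarith [Real.add_one_le_exp x]
          have h6 : Real.exp (-x) > 0 := Real.exp_pos _
          calc (1 + x) * Real.exp (-x) ≤ Real.exp x * Real.exp (-x) :=
                mul_le_mul_of_nonneg_right h5 h6.le
            _ = 1 := by rw [← Real.exp_add]; simp
        linarith
    have := hmono (Set.mem_Ici.2 le_rfl) (Set.mem_Ici.2 ht) ht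
    simpa using this
  have h := key y hy
  have hpos := Real.exp_pos y
  have hne : Real.exp (-y) * Real.exp y = 1 := by rw [← Real.exp_add]; simp
  nlinarith [h, hpos, hne]

lemma cheb_eval_formula {x : ℝ} (hx : 1 ≤ x) (n : ℕ) :
    (Chebyshev.T ℝ n).eval x =
      ((x + Real.sqrt (x ^ 2 - 1)) ^ n + (x + Real.sqrt (x ^ 2 - 1))⁻¹ ^ n) / 2 := by
  set s := Real.sqrt (x ^ 2 - 1) with hs
  have hs0 : 0 ≤ s := Real.sqrt_nonneg _
  have hssq : s ^ 2 = x ^ 2 - 1 := Real.sq_sqrt (by nlinarith)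
  set u := x + s with hu
  have hu1 : 1 ≤ u := by linarith
  have hu0 : 0 < u := by linarith
  have huinv : u⁻¹ = x - s := by
    have h1 : u * (x - s) = 1 := by nlinarith
    field_simp
    linarith [h1]
  have hsum : u + u⁻¹ = 2 * x := by rw [huinv]; ring
  have huu : u * u⁻¹ = 1 := mul_inv_cancel₀ (ne_of_gt hu0)
  -- two-step induction
  suffices h : ∀ m : ℕ, (Chebyshev.T ℝ m).eval x = (u ^ m + u⁻¹ ^ m) / 2 ∧
      (Chebyshev.T ℝ (m + 1)).eval x = (u ^ (m + 1) + u⁻¹ ^ (m + 1)) / 2 from (h n).1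
  intro m
  induction m with
  | zero => simp [Polynomial.Chebyshev.T_zero, Polynomial.Chebyshev.T_one]; linarith [hsum]
  | succ k ih =>
    refine ⟨ih.2, ?_⟩
    have hrec := Polynomial.Chebyshev.T_add_two ℝ (k : ℤ)
    have heval : (Chebyshev.T ℝ ((k : ℤ) + 2)).eval x =
        2 * x * (Chebyshev.T ℝ ((k : ℤ) + 1)).eval x - (Chebyshev.T ℝ (k : ℤ)).eval x := by
      rw [hrec]; simp [Polynomial.eval_mul, Polynomial.eval_sub]
    have hcast : ((k : ℤ) + 2) = ((k + 1 : ℕ) : ℤ) + 1 := by push_cast; ring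
    have hcast2 : ((k : ℤ) + 1) = ((k + 1 : ℕ) : ℤ) := by push_cast; ring
    rw [hcast, hcast2] at heval
    rw [heval, show ((k + 1 : ℕ) : ℤ) = (k : ℤ) + 1 by push_cast; ring, ih.1, ih.2]
    have key : u ^ (k + 1 + 1) + u⁻¹ ^ (k + 1 + 1) =
        2 * x * (u ^ (k + 1) + u⁻¹ ^ (k + 1)) - (u ^ k + u⁻¹ ^ k) := by
      have e : (2:ℝ) * x = u + u⁻¹ := hsum.symm
      rw [e]
      have e1 : u * u⁻¹ ^ (k + 1) = u⁻¹ ^ k := by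
        rw [pow_succ']; rw [← mul_assoc, huu, one_mul]
      have e2 : u⁻¹ * u ^ (k + 1) = u ^ k := by
        rw [pow_succ']; rw [← mul_assoc, mul_comm u⁻¹ u, huu, one_mul]
      ring_nf
      ring_nf at e1 e2
      nlinarith [e1, e2]
    linarith [key]
lemma cheb_abs_le {x : ℝ} (hx1 : -1 ≤ x) (hx2 : x ≤ 1) (n : ℕ) :
    |(Chebyshev.T ℝ n).eval x| ≤ 1 := by
  have h : x = Real.cos (Real.arccos x) := (Real.cos_arccos hx1 hx2).symm
  rw [h, Polynomial.Chebyshev.T_real_cos]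
  exact Real.abs_cos_le_one _

lemma cheb_one_le {x : ℝ} (hx : 1 ≤ x) (n : ℕ) : 1 ≤ (Chebyshev.T ℝ n).eval x := by
  rw [cheb_eval_formula hx n]
  set u := x + Real.sqrt (x ^ 2 - 1) with hu
  have hu1 : 1 ≤ u := by have := Real.sqrt_nonneg (x ^ 2 - 1); linarith
  have hw1 : 1 ≤ u ^ n := one_le_pow₀ hu1
  have hw0 : 0 < u ^ n := by linarith
  have : u ^ n * (u ^ n)⁻¹ = 1 := mul_inv_cancel₀ (ne_of_gt hw0)
  rw [inv_pow]
  nlinarith [sq_nonneg (u ^ n - 1)]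

lemma cheb_mono {a b : ℝ} (hb : 1 ≤ b) (hab : b ≤ a) (n : ℕ) :
    (Chebyshev.T ℝ n).eval b ≤ (Chebyshev.T ℝ n).eval a := by
  rw [cheb_eval_formula hb n, cheb_eval_formula (le_trans hb hab) n]
  set ub := b + Real.sqrt (b ^ 2 - 1) with hub
  set ua := a + Real.sqrt (a ^ 2 - 1) with hua
  have h1 : ub ≤ ua := by
    have : Real.sqrt (b ^ 2 - 1) ≤ Real.sqrt (a ^ 2 - 1) :=
      Real.sqrt_le_sqrt (by nlinarith)
    rw [hua, hub]; linarith
  have hub1 : 1 ≤ ub := by have := Real.sqrt_nonneg (b ^ 2 - 1); rw [hub]; linarith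
  have hwb : 1 ≤ ub ^ n := one_le_pow₀ hub1
  have hwa : ub ^ n ≤ ua ^ n := pow_le_pow_left₀ (by linarith) h1 n
  have hwb0 : 0 < ub ^ n := by linarith
  have hwa0 : 0 < ua ^ n := by linarith
  have ib : ub ^ n * (ub ^ n)⁻¹ = 1 := mul_inv_cancel₀ (ne_of_gt hwb0)
  have ia : ua ^ n * (ua ^ n)⁻¹ = 1 := mul_inv_cancel₀ (ne_of_gt hwa0)
  rw [inv_pow, inv_pow]
  set A := ua ^ n
  set B := ub ^ n
  have hABinv : B⁻¹ * A⁻¹ ≤ 1 := by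
    have h8 : 1 ≤ B * A := one_le_mul_of_one_le_of_one_le hwb (le_trans hwb hwa)
    have h9 : 0 < B * A := by linarith
    have : B⁻¹ * A⁻¹ = (B * A)⁻¹ := by rw [mul_inv]
    rw [this]
    exact inv_le_one_of_one_le₀ h8
  have hkey : B⁻¹ - A⁻¹ = (A - B) * (B⁻¹ * A⁻¹) := by
    field_simp
  have h7 : (A - B) * (B⁻¹ * A⁻¹) ≤ (A - B) * 1 :=
    mul_le_mul_of_nonneg_left hABinv (by linarith)
  linarith [hkey, h7]

set_option maxHeartbeats 1000000 in
lemma cheb_big {κ ν : ℝ} (hκ : 0 < κ) (hν0 : 0 < ν) (hν1 : ν ≤ 1) (n : ℕ)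
    (hn : Real.sqrt (κ + 1) / 4 * Real.log (4 * (κ + 1) * (1 - ν) / ν) ≤ (n : ℝ)) :
    κ * (1 - ν) / ν ≤ ((Chebyshev.T ℝ n).eval (1 + 2 / κ)) ^ 2 := by
  have hx : (1 : ℝ) ≤ 1 + 2 / κ := by
    have : 0 < 2 / κ := by positivity
    linarith
  have hT1 : 1 ≤ (Chebyshev.T ℝ n).eval (1 + 2 / κ) := cheb_one_le hx n
  obtain ⟨E, hE⟩ : ∃ E : ℝ, (Chebyshev.T ℝ (n : ℤ)).eval (1 + 2 / κ) = E := ⟨_, rfl⟩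
  rw [hE] at hT1 ⊢
  by_cases htriv : κ * (1 - ν) / ν ≤ 1
  · nlinarith
  push_neg at htriv
  obtain ⟨s, hsdef⟩ : ∃ s : ℝ, Real.sqrt (κ + 1) = s := ⟨_, rfl⟩
  rw [hsdef] at hn
  have hs2 : s ^ 2 = κ + 1 := by rw [← hsdef]; exact Real.sq_sqrt (by linarith)
  have hs0 : 0 ≤ s := by rw [← hsdef]; exact Real.sqrt_nonneg _
  have hs1 : 1 < s := by nlinarith
  have hsqrt : Real.sqrt ((1 + 2 / κ) ^ 2 - 1) = 2 * s / κ := by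
    have h1 : (1 + 2 / κ) ^ 2 - 1 = (2 * s / κ) ^ 2 := by
      field_simp
      nlinarith [hs2]
    rw [h1, Real.sqrt_sq (div_nonneg (by linarith) hκ.le)]
  have hformula := cheb_eval_formula hx n
  rw [hsqrt, hE] at hformula
  obtain ⟨u, hudef⟩ : ∃ u : ℝ, 1 + 2 / κ + 2 * s / κ = u := ⟨_, rfl⟩
  rw [hudef] at hformula
  have hueq : u = (s + 1) / (s - 1) := by
    rw [← hudef, show κ = s ^ 2 - 1 by linarith]
    have h1 : s - 1 ≠ 0 := by linarith
    have h2 : s ^ 2 - 1 ≠ 0 := by nlinarith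
    field_simp
    ring
  have hu1 : 1 < u := by
    rw [hueq, lt_div_iff₀ (by linarith)]
    linarith
  -- u ≥ exp(2/s)
  have huexp : Real.exp (2 / s) ≤ u := by
    have h0 : (0:ℝ) ≤ 2 / s := by positivity
    have h := exp_aux h0
    have h2 : 0 < 2 - 2 / s := by
      have : 2 / s < 2 := by rw [div_lt_iff₀ (by linarith)]; nlinarith
      linarith
    rw [hueq, le_div_iff₀ (by linarith)]
    have h3 : Real.exp (2 / s) * (s - 1) = ((2 - 2 / s) * Real.exp (2 / s)) * (s / 2) := by
      field_simp
    rw [h3]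
    have h4 : ((2 - 2/s) * Real.exp (2/s)) * (s/2) ≤ (2 + 2/s) * (s/2) :=
      mul_le_mul_of_nonneg_right h (by positivity)
    have h5 : (2 + 2/s) * (s/2) = s + 1 := by field_simp
    linarith
  obtain ⟨R, hRdef⟩ : ∃ R : ℝ, 4 * (κ + 1) * (1 - ν) / ν = R := ⟨_, rfl⟩
  rw [hRdef] at hn
  have hν1' : 0 ≤ 1 - ν := by linarith
  have hR4 : 4 * (κ * (1 - ν) / ν) ≤ R := by
    have he : 4 * (κ * (1 - ν) / ν) = 4 * κ * (1 - ν) / ν := by ring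
    rw [he, ← hRdef, div_le_div_iff₀ hν0 hν0]
    nlinarith
  have hRpos : 0 < R := by nlinarith
  have hlog : Real.log R ≤ 4 * (n : ℝ) / s := by
    rw [le_div_iff₀ (by linarith : (0:ℝ) < s)]
    nlinarith [hn]
  have hexpR : R ≤ Real.exp (4 * (n : ℝ) / s) := by
    calc R = Real.exp (Real.log R) := (Real.exp_log hRpos).symm
      _ ≤ Real.exp (4 * (n : ℝ) / s) := Real.exp_le_exp.2 hlog
  -- chain
  have hinvpos : 0 ≤ u⁻¹ ^ n := pow_nonneg (inv_nonneg.2 (by linarith)) n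
  have hTge : u ^ n / 2 ≤ E := by rw [hformula]; linarith
  have hun : Real.exp (2 * (n : ℝ) / s) ≤ u ^ n := by
    have h1 : Real.exp (2 / s) ^ n ≤ u ^ n :=
      pow_le_pow_left₀ (Real.exp_pos _).le huexp n
    have h2 : Real.exp (2 * (n : ℝ) / s) = Real.exp (2 / s) ^ n := by
      rw [← Real.exp_nat_mul]
      congr 1
      ring
    rw [h2]
    exact h1
  have hupow0 : 0 ≤ u ^ n / 2 := by positivity
  have hsq : (u ^ n / 2) ^ 2 ≤ E ^ 2 := by nlinarith
  have hfin : R / 4 ≤ (u ^ n / 2) ^ 2 := by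
    have h1 : Real.exp (2 * (n:ℝ) / s) ^ 2 = Real.exp (4 * (n:ℝ) / s) := by
      rw [sq, ← Real.exp_add]
      congr 1
      ring
    nlinarith [Real.exp_pos (2 * (n:ℝ) / s), hun, hexpR, h1]
  linarith [hR4, hfin, hsq]

open Polynomial in
lemma cheb_natDegree_le (n : ℕ) : (Chebyshev.T ℝ n).natDegree ≤ n := by
  suffices h : ∀ m : ℕ, (Chebyshev.T ℝ m).natDegree ≤ m ∧
      (Chebyshev.T ℝ (m + 1 : ℕ)).natDegree ≤ m + 1 from (h n).1
  intro m
  induction m with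
  | zero =>
    constructor
    · simp [Polynomial.Chebyshev.T_zero]
    · norm_num [Polynomial.Chebyshev.T_one]
  | succ k ih =>
    refine ⟨ih.2, ?_⟩
    have hrec := Polynomial.Chebyshev.T_add_two ℝ (k : ℤ)
    rw [show ((k : ℤ) + 2) = ((k + 1 + 1 : ℕ) : ℤ) by push_cast; ring,
      show ((k : ℤ) + 1) = ((k + 1 : ℕ) : ℤ) by push_cast; ring] at hrec
    rw [hrec]
    refine le_trans (Polynomial.natDegree_sub_le _ _) ?_
    rw [max_le_iff]
    constructor
    · refine le_trans (Polynomial.natDegree_mul_le) ?_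
      have h1 : (2 * Polynomial.X : ℝ[X]).natDegree ≤ 1 := by
        refine le_trans (Polynomial.natDegree_mul_le) ?_
        simp
      have h2 := ih.2
      omega
    · have := ih.1; omega

lemma sum_smul_dot_left {d : ℕ} (u : Fin d → Fin d → ℝ) (a : Fin d → ℝ) (y : Fin d → ℝ) :
    (∑ i, a i • u i) ⬝ᵥ y = ∑ i, a i * (u i ⬝ᵥ y) := by
  simp only [dotProduct, Finset.sum_apply, Pi.smul_apply, smul_eq_mul, Finset.sum_mul,
    Finset.mul_sum]
  rw [Finset.sum_comm]
  exact Finset.sum_congr rfl fun i _ => Finset.sum_congr rfl fun j _ => by ring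

lemma dot_sum_smul_right {d : ℕ} (u : Fin d → Fin d → ℝ) (b : Fin d → ℝ) (x : Fin d → ℝ) :
    x ⬝ᵥ (∑ i, b i • u i) = ∑ i, b i * (x ⬝ᵥ u i) := by
  simp only [dotProduct, Finset.sum_apply, Pi.smul_apply, smul_eq_mul, Finset.sum_mul,
    Finset.mul_sum]
  rw [Finset.sum_comm]
  exact Finset.sum_congr rfl fun i _ => Finset.sum_congr rfl fun j _ => by ring

lemma sum_smul_dot_basis {d : ℕ} (u : Fin d → Fin d → ℝ)
    (hu : ∀ i j, u i ⬝ᵥ u j = if i = j then 1 else 0) (a : Fin d → ℝ) (j : Fin d) :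
    (∑ i, a i • u i) ⬝ᵥ u j = a j := by
  rw [sum_smul_dot_left]
  simp_rw [hu]
  simp

lemma sum_smul_dot_sum_smul {d : ℕ} (u : Fin d → Fin d → ℝ)
    (hu : ∀ i j, u i ⬝ᵥ u j = if i = j then 1 else 0) (a b : Fin d → ℝ) :
    (∑ i, a i • u i) ⬝ᵥ (∑ i, b i • u i) = ∑ i, a i * b i := by
  rw [sum_smul_dot_left]
  refine Finset.sum_congr rfl fun i _ => ?_
  rw [dot_sum_smul_right]
  simp_rw [hu]
  simp

end NPCAux

set_option maxHeartbeats 1000000 in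
open NPCAux in
/-- Complexity of detecting a nonpositive-curvature direction: the Krylov subspace of
degree `min T_j g*` contains a nonzero direction of nonpositive curvature. -/
theorem npc_detection_complexity {d : ℕ} (H : Matrix (Fin d) (Fin d) ℝ)
    (hH : H.IsSymm) (g : Fin d → ℝ) (hg : g ≠ 0)
    (gstar : ℕ) (hgstar : 0 < gstar)
    (hgrade : ∀ t : ℕ, Module.finrank ℝ (Krylov H g t) = min t gstar)
    (lam1 lamj : ℝ)
    (h1 : gRelevant H g lam1) (h1pos : 0 < lam1)
    (h1max : ∀ lam : ℝ, gRelevant H g lam → lam ≤ lam1)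
    (hj : gRelevant H g lamj) (hjneg : lamj < 0)
    (κj : ℝ) (hκj : κj = lam1 / (-lamj))
    (W : Submodule ℝ (Fin d → ℝ))
    (hW : W = Submodule.span ℝ
      {v : Fin d → ℝ | ∃ lam : ℝ, gRelevant H g lam ∧ lam ≤ lamj ∧ H *ᵥ v = lam • v})
    (Q : Matrix (Fin d) (Fin d) ℝ) (hQsymm : Q.IsSymm)
    (hQrange : ∀ x : Fin d → ℝ, Q *ᵥ x ∈ W)
    (hQfix : ∀ x ∈ W, Q *ᵥ x = x)
    (νj : ℝ) (hνj : νj = ((Q *ᵥ g) ⬝ᵥ (Q *ᵥ g)) / (g ⬝ᵥ g))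
    (Tj : ℕ)
    (hTj : Tj = max
      ⌈Real.sqrt (κj + 1) / 4 * Real.log (4 * (κj + 1) * (1 - νj) / νj) + 1⌉₊ 1) :
    ∃ z ∈ Krylov H g (min Tj gstar), z ≠ 0 ∧ z ⬝ᵥ (H *ᵥ z) ≤ 0 := by
  classical
  have hH' : H.IsHermitian := by
    rw [Matrix.IsHermitian, Matrix.conjTranspose_eq_transpose_of_trivial]
    exact hH
  set μ : Fin d → ℝ := hH'.eigenvalues with hμdef
  set u : Fin d → (Fin d → ℝ) := fun i => ⇑(hH'.eigenvectorBasis i) with hudef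
  have hmu : ∀ i, H *ᵥ u i = μ i • u i := fun i => hH'.mulVec_eigenvectorBasis i
  have hortho : ∀ i j, u i ⬝ᵥ u j = if i = j then 1 else 0 := by
    intro i j
    have h := (orthonormal_iff_ite.mp hH'.eigenvectorBasis.orthonormal) i j
    simpa [PiLp.inner_apply, RCLike.inner_apply, conj_trivial, dotProduct, hudef, mul_comm] using h
  have hexp : ∀ v : Fin d → ℝ, ∑ i, (u i ⬝ᵥ v) • u i = v := by
    intro v
    have h := congrArg WithLp.ofLp (hH'.eigenvectorBasis.sum_repr' (WithLp.toLp 2 v))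
    have h2 : ∀ i, (inner ℝ (hH'.eigenvectorBasis i) (WithLp.toLp 2 v) : ℝ)
        = u i ⬝ᵥ v := by
      intro i
      simp [PiLp.inner_apply, RCLike.inner_apply, conj_trivial, dotProduct, hudef, mul_comm]
    calc ∑ i, (u i ⬝ᵥ v) • u i
        = ∑ i, (inner ℝ (hH'.eigenvectorBasis i) (WithLp.toLp 2 v) : ℝ) • u i := by
          simp_rw [h2]
      _ = v := by simpa [hudef] using h
  set c : Fin d → ℝ := fun i => u i ⬝ᵥ g with hcdef
  have hg_exp : ∑ i, c i • u i = g := hexp g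
  have hsymmdot : ∀ (M : Matrix (Fin d) (Fin d) ℝ), M.IsSymm →
      ∀ x y : Fin d → ℝ, x ⬝ᵥ (M *ᵥ y) = (M *ᵥ x) ⬝ᵥ y := by
    intro M hM x y
    rw [Matrix.dotProduct_mulVec, ← Matrix.mulVec_transpose, hM.eq]
  have heig_dot : ∀ (v : Fin d → ℝ) (lam : ℝ), H *ᵥ v = lam • v →
      ∀ i, (μ i - lam) * (u i ⬝ᵥ v) = 0 := by
    intro v lam hv i
    have h1 : u i ⬝ᵥ (H *ᵥ v) = lam * (u i ⬝ᵥ v) := by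
      rw [hv, dotProduct_smul, smul_eq_mul]
    have h2 : u i ⬝ᵥ (H *ᵥ v) = μ i * (u i ⬝ᵥ v) := by
      rw [hsymmdot H hH, hmu i, smul_dotProduct, smul_eq_mul]
    linear_combination h1 - h2
  have hrel_of_c : ∀ i, c i ≠ 0 → gRelevant H g (μ i) := fun i hi => ⟨u i, hmu i, hi⟩
  have hc_of_rel : ∀ lam, gRelevant H g lam → ∃ i, c i ≠ 0 ∧ μ i = lam := by
    rintro lam ⟨v, hv, hvg⟩
    have h1 : v ⬝ᵥ g = ∑ i, (u i ⬝ᵥ v) * c i := by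
      conv_lhs => rw [← hexp v]
      rw [sum_smul_dot_left]
    rw [h1] at hvg
    obtain ⟨i, -, hi⟩ := Finset.exists_ne_zero_of_sum_ne_zero hvg
    have hmui : μ i = lam := by
      rcases mul_eq_zero.mp (heig_dot v lam hv i) with h | h
      · linarith [sub_eq_zero.mp h]
      · exact absurd h (left_ne_zero_of_mul hi)
    exact ⟨i, right_ne_zero_of_mul hi, hmui⟩
  obtain ⟨i0, hci0, hμi0⟩ := hc_of_rel lamj hj
  have hle1 : ∀ i, c i ≠ 0 → μ i ≤ lam1 := fun i hi => h1max _ (hrel_of_c i hi)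
  -- powers of H applied to eigenvectors
  have hpowu : ∀ (k : ℕ) (i : Fin d), (H ^ k) *ᵥ u i = (μ i ^ k) • u i := by
    intro k i
    induction k with
    | zero => simp [Matrix.one_mulVec]
    | succ k ih =>
      rw [pow_succ', ← Matrix.mulVec_mulVec, ih, Matrix.mulVec_smul, hmu i, smul_smul, pow_succ]
  have hmulVec_sum : ∀ (M : Matrix (Fin d) (Fin d) ℝ) (a : Fin d → ℝ) (w : Fin d → Fin d → ℝ),
      M *ᵥ (∑ i, a i • w i) = ∑ i, a i • (M *ᵥ w i) := by
    intro M a w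
    rw [← Matrix.mulVecLin_apply, map_sum]
    simp_rw [_root_.map_smul, Matrix.mulVecLin_apply]
  have hHkg : ∀ k : ℕ, (H ^ k) *ᵥ g = ∑ i, (c i * μ i ^ k) • u i := by
    intro k
    conv_lhs => rw [← hg_exp]
    rw [hmulVec_sum]
    simp_rw [hpowu, smul_smul]
  have hz_mem : ∀ (p : Polynomial ℝ) (tt : ℕ), p.natDegree < tt →
      (∑ i, (c i * p.eval (μ i)) • u i) ∈ Krylov H g tt := by
    intro p tt hdeg
    have hrepr : ∑ k ∈ Finset.range tt, p.coeff k • ((H ^ k) *ᵥ g)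
        = ∑ i, (c i * p.eval (μ i)) • u i := by
      simp_rw [hHkg, Finset.smul_sum, smul_smul]
      rw [Finset.sum_comm]
      refine Finset.sum_congr rfl fun i _ => ?_
      rw [Polynomial.eval_eq_sum_range' hdeg, Finset.mul_sum, ← Finset.sum_smul]
      congr 1
      refine Finset.sum_congr rfl fun k _ => ?_
      ring
    rw [← hrepr]
    refine Submodule.sum_mem _ fun k hk => Submodule.smul_mem _ _ ?_
    exact Submodule.subset_span ⟨k, Finset.mem_range.mp hk, rfl⟩
  -- W orthogonality
  have hWsub : ∀ w ∈ W, ∀ i, ¬(gRelevant H g (μ i) ∧ μ i ≤ lamj) → u i ⬝ᵥ w = 0 := by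
    intro w hw
    rw [hW] at hw
    induction hw using Submodule.span_induction with
    | mem x hx =>
      intro i hcond
      obtain ⟨lam, hrel, hle, heig⟩ := hx
      rcases mul_eq_zero.mp (heig_dot x lam heig i) with h | h
      · exact absurd ⟨(sub_eq_zero.mp h) ▸ hrel, (sub_eq_zero.mp h) ▸ hle⟩ hcond
      · exact h
    | zero => intro i _; exact dotProduct_zero _
    | add x y hx hy ihx ihy =>
      intro i hc
      rw [dotProduct_add, ihx i hc, ihy i hc, add_zero]
    | smul r x hx ihx =>
      intro i hc
      rw [dotProduct_smul, ihx i hc, smul_zero]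
  have hQg_exp : Q *ᵥ g = ∑ i, (if μ i ≤ lamj then c i else 0) • u i := by
    conv_lhs => rw [← hexp (Q *ᵥ g)]
    refine Finset.sum_congr rfl fun i _ => ?_
    congr 1
    by_cases hrel : gRelevant H g (μ i) ∧ μ i ≤ lamj
    · have huiW : u i ∈ W := by
        rw [hW]
        exact Submodule.subset_span ⟨μ i, hrel.1, hrel.2, hmu i⟩
      rw [hsymmdot Q hQsymm (u i) g, hQfix _ huiW, if_pos hrel.2]
    · rw [hWsub _ (hQrange g) i hrel]
      by_cases hle : μ i ≤ lamj
      · rw [if_pos hle]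
        by_contra hne
        exact hrel ⟨hrel_of_c i fun h => hne h.symm, hle⟩
      · rw [if_neg hle]
  have hQQ : (Q *ᵥ g) ⬝ᵥ (Q *ᵥ g) = ∑ i, (if μ i ≤ lamj then c i ^ 2 else 0) := by
    rw [hQg_exp, sum_smul_dot_sum_smul u hortho]
    refine Finset.sum_congr rfl fun i _ => ?_
    split_ifs <;> ring
  have hgg : g ⬝ᵥ g = ∑ i, c i ^ 2 := by
    conv_lhs => rw [← hg_exp]
    rw [sum_smul_dot_sum_smul u hortho]
    exact Finset.sum_congr rfl fun i _ => (pow_two (c i)).symm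
  have hGpos : 0 < ∑ i, c i ^ 2 := by
    have h1 : c i0 ^ 2 ≤ ∑ i, c i ^ 2 :=
      Finset.single_le_sum (fun i _ => sq_nonneg (c i)) (Finset.mem_univ i0)
    have h2 : 0 < c i0 ^ 2 := by positivity
    linarith
  have hSν : ∑ i, (if μ i ≤ lamj then c i ^ 2 else 0) = νj * ∑ i, c i ^ 2 := by
    rw [hνj, hgg, hQQ]
    field_simp
  have hSpos : 0 < ∑ i, (if μ i ≤ lamj then c i ^ 2 else 0) := by
    have h1 : (if μ i0 ≤ lamj then c i0 ^ 2 else 0) ≤ ∑ i, (if μ i ≤ lamj then c i ^ 2 else 0) :=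
      Finset.single_le_sum (f := fun i => if μ i ≤ lamj then c i ^ 2 else 0)
        (fun i _ => by split_ifs; exacts [sq_nonneg _, le_rfl]) (Finset.mem_univ i0)
    rw [hμi0, if_pos le_rfl] at h1
    have h2 : 0 < c i0 ^ 2 := by positivity
    linarith
  have hν0 : 0 < νj := by
    by_contra hcon
    push_neg at hcon
    nlinarith
  have hν1 : νj ≤ 1 := by
    have h1 : ∑ i, (if μ i ≤ lamj then c i ^ 2 else 0) ≤ ∑ i, c i ^ 2 :=
      Finset.sum_le_sum (f := fun i => if μ i ≤ lamj then c i ^ 2 else 0)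
        (g := fun i => c i ^ 2) fun i _ => by split_ifs; exacts [le_rfl, sq_nonneg _]
    nlinarith
  have hTj1 : 1 ≤ Tj := by rw [hTj]; exact le_max_right _ 1
  clear_value μ u c
  have hcurv : ∀ a : Fin d → ℝ,
      (∑ i, a i • u i) ⬝ᵥ (H *ᵥ (∑ i, a i • u i)) = ∑ i, μ i * a i ^ 2 := by
    intro a
    rw [hmulVec_sum]
    simp_rw [hmu, smul_smul]
    rw [sum_smul_dot_sum_smul u hortho]
    exact Finset.sum_congr rfl fun i _ => by ring
  rcases le_total Tj gstar with hcase | hcase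
  · -- Chebyshev case: Tj ≤ gstar
    have htmin : min Tj gstar = Tj := min_eq_left hcase
    set n := Tj - 1 with hndef
    have hncast : (n : ℝ) = (Tj : ℝ) - 1 := by
      rw [hndef, Nat.cast_sub hTj1]; norm_num
    have hlamjne : lamj ≠ 0 := ne_of_lt hjneg
    have hκpos : 0 < κj := by rw [hκj]; exact div_pos h1pos (by linarith)
    have hn : Real.sqrt (κj + 1) / 4 * Real.log (4 * (κj + 1) * (1 - νj) / νj) ≤ (n : ℝ) := by
      rcases le_or_gt (Real.sqrt (κj + 1) / 4 * Real.log (4 * (κj + 1) * (1 - νj) / νj)) 0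
        with hx | hx
      · have h30 : (0:ℝ) ≤ (n:ℝ) := Nat.cast_nonneg n
        linarith
      · have h31 : Real.sqrt (κj + 1) / 4 * Real.log (4 * (κj + 1) * (1 - νj) / νj) + 1
            ≤ (⌈Real.sqrt (κj + 1) / 4 * Real.log (4 * (κj + 1) * (1 - νj) / νj) + 1⌉₊ : ℝ) :=
          Nat.le_ceil _
        have h32 : (⌈Real.sqrt (κj + 1) / 4 * Real.log (4 * (κj + 1) * (1 - νj) / νj) + 1⌉₊ : ℕ)
            ≤ Tj := by rw [hTj]; exact le_max_left _ _
        have h33 := Nat.cast_le (α := ℝ) |>.mpr h32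
        rw [hncast]
        linarith
    have hb1 : (1:ℝ) ≤ 1 - 2 / lam1 * lamj := by
      have h4 : 0 < 2 / lam1 := by positivity
      nlinarith
    have hκb : 1 - 2 / lam1 * lamj = 1 + 2 / κj := by
      rw [hκj]
      field_simp
      ring
    set B := (Polynomial.Chebyshev.T ℝ (n : ℤ)).eval (1 - 2 / lam1 * lamj) with hBdef
    clear_value B
    have hB1 : 1 ≤ B := by rw [hBdef]; exact NPCAux.cheb_one_le hb1 n
    have hBbig : κj * (1 - νj) / νj ≤ B ^ 2 := by
      have h5 := NPCAux.cheb_big hκpos hν0 hν1 n hn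
      rw [← hκb] at h5
      rw [hBdef]
      exact h5
    set p := (Polynomial.Chebyshev.T ℝ (n : ℤ)).comp
      (Polynomial.C 1 - Polynomial.C (2 / lam1) * Polynomial.X) with hpdef
    have hpeval : ∀ x : ℝ,
        p.eval x = (Polynomial.Chebyshev.T ℝ (n : ℤ)).eval (1 - 2 / lam1 * x) := by
      intro x
      rw [hpdef, Polynomial.eval_comp]
      simp
    have hpdeg : p.natDegree < Tj := by
      have h6 : p.natDegree ≤ (Polynomial.Chebyshev.T ℝ (n : ℤ)).natDegree *
          (Polynomial.C 1 - Polynomial.C (2 / lam1) * Polynomial.X).natDegree :=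
        Polynomial.natDegree_comp_le
      have h7 : (Polynomial.C 1 - Polynomial.C (2 / lam1) * Polynomial.X :
          Polynomial ℝ).natDegree ≤ 1 := by
        refine le_trans (Polynomial.natDegree_sub_le _ _) ?_
        rw [max_le_iff]
        refine ⟨by simp, ?_⟩
        refine le_trans Polynomial.natDegree_mul_le ?_
        simp
      have h8 := cheb_natDegree_le n
      have h9 : p.natDegree ≤ n := by
        calc p.natDegree ≤ _ := h6
          _ ≤ n * 1 := Nat.mul_le_mul h8 h7
          _ = n := by omega
      omega
    refine ⟨∑ i, (c i * p.eval (μ i)) • u i, ?_, ?_, ?_⟩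
    · rw [htmin]; exact hz_mem p Tj hpdeg
    · intro h0
      have h10 : (∑ i, (c i * p.eval (μ i)) • u i) ⬝ᵥ u i0 = c i0 * p.eval (μ i0) :=
        sum_smul_dot_basis u hortho _ i0
      rw [h0, zero_dotProduct] at h10
      rw [hμi0, hpeval] at h10
      rcases mul_eq_zero.mp h10.symm with h | h
      · exact hci0 h
      · rw [← hBdef] at h
        linarith
    · rw [hcurv]
      have hterm : ∀ i, μ i * (c i * p.eval (μ i)) ^ 2 ≤
          (if μ i ≤ lamj then lamj * B ^ 2 * c i ^ 2 else lam1 * c i ^ 2) := by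
        intro i
        by_cases hle : μ i ≤ lamj
        · rw [if_pos hle]
          have ha1 : 1 - 2 / lam1 * lamj ≤ 1 - 2 / lam1 * μ i := by
            have h4 : 0 < 2 / lam1 := by positivity
            nlinarith
          have hmono := NPCAux.cheb_mono hb1 ha1 n
          rw [hpeval]
          have hμneg : μ i < 0 := lt_of_le_of_lt hle hjneg
          rw [← hBdef] at hmono
          set φ := (Polynomial.Chebyshev.T ℝ (n : ℤ)).eval (1 - 2 / lam1 * μ i) with hφdef
          clear_value φ
          have hφB2 : B ^ 2 ≤ φ ^ 2 := by nlinarith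
          have h60 : μ i * (c i ^ 2 * φ ^ 2) ≤ μ i * (c i ^ 2 * B ^ 2) :=
            mul_le_mul_of_nonpos_left
              (mul_le_mul_of_nonneg_left hφB2 (sq_nonneg (c i))) hμneg.le
          have h61 : μ i * (c i ^ 2 * B ^ 2) ≤ lamj * (c i ^ 2 * B ^ 2) :=
            mul_le_mul_of_nonneg_right hle (by positivity)
          calc μ i * (c i * φ) ^ 2 = μ i * (c i ^ 2 * φ ^ 2) := by ring
            _ ≤ μ i * (c i ^ 2 * B ^ 2) := h60
            _ ≤ lamj * (c i ^ 2 * B ^ 2) := h61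
            _ = lamj * B ^ 2 * c i ^ 2 := by ring
        · rw [if_neg hle]
          push_neg at hle
          by_cases hc0 : c i = 0
          · rw [hc0]
            simp
          · have hup : μ i ≤ lam1 := hle1 i hc0
            by_cases hpos : 0 < μ i
            · have h40 : 0 < 2 / lam1 := by positivity
              have h41 := mul_le_mul_of_nonneg_left hup h40.le
              have h12 : 2 / lam1 * lam1 = 2 := by field_simp
              have ha1 : -1 ≤ 1 - 2 / lam1 * μ i := by linarith
              have ha2 : 1 - 2 / lam1 * μ i ≤ 1 := by nlinarith
              have habs := NPCAux.cheb_abs_le ha1 ha2 n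
              rw [hpeval]
              set φ := (Polynomial.Chebyshev.T ℝ (n : ℤ)).eval (1 - 2 / lam1 * μ i) with hφdef
              clear_value φ
              have hφ2 : φ ^ 2 ≤ 1 := by nlinarith [abs_nonneg φ, sq_abs φ]
              nlinarith [sq_nonneg (c i)]
            · push_neg at hpos
              have h42 : μ i * (c i * p.eval (μ i)) ^ 2 ≤ 0 :=
                mul_nonpos_of_nonpos_of_nonneg hpos (sq_nonneg _)
              nlinarith [sq_nonneg (c i)]
      calc (∑ i, μ i * (c i * p.eval (μ i)) ^ 2)
          ≤ ∑ i, (if μ i ≤ lamj then lamj * B ^ 2 * c i ^ 2 else lam1 * c i ^ 2) :=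
            Finset.sum_le_sum fun i _ => hterm i
        _ = lamj * B ^ 2 * (∑ i, if μ i ≤ lamj then c i ^ 2 else 0)
            + lam1 * ((∑ i, c i ^ 2) - ∑ i, if μ i ≤ lamj then c i ^ 2 else 0) := by
            rw [Finset.mul_sum, mul_sub, Finset.mul_sum, Finset.mul_sum, ← Finset.sum_sub_distrib,
              ← Finset.sum_add_distrib]
            refine Finset.sum_congr rfl fun i _ => ?_
            split_ifs <;> ring
        _ ≤ 0 := by
            rw [hSν]
            have hlam1 : lam1 = κj * (-lamj) := by
              rw [hκj]
              field_simp
            have h13 : κj * (1 - νj) ≤ B ^ 2 * νj := (div_le_iff₀ hν0).mp hBbig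
            have h14 : κj * (1 - νj) * (∑ i, c i ^ 2) ≤ B ^ 2 * νj * (∑ i, c i ^ 2) :=
              mul_le_mul_of_nonneg_right h13 hGpos.le
            have hneg : (0:ℝ) ≤ -lamj := by linarith
            nlinarith [mul_le_mul_of_nonneg_left h14 hneg]
  · -- Lagrange case: gstar ≤ Tj
    have htmin : min Tj gstar = gstar := min_eq_right hcase
    set E : Finset ℝ := Finset.image μ (Finset.univ.filter fun i => c i ≠ 0) with hEdef
    have hEmem : ∀ i, c i ≠ 0 → μ i ∈ E := fun i hi => by
      rw [hEdef]
      exact Finset.mem_image.mpr ⟨i, Finset.mem_filter.mpr ⟨Finset.mem_univ _, hi⟩, rfl⟩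
    have hcard : E.card ≤ gstar := by
      by_contra hcon
      push_neg at hcon
      set m := E.card with hmdef
      have hdep : ¬ LinearIndependent ℝ (fun k : Fin m => (H ^ (k : ℕ)) *ᵥ g) := by
        intro hLI
        have h20 := finrank_span_eq_card hLI
        rw [Fintype.card_fin] at h20
        have hrangeE : Set.range (fun k : Fin m => (H ^ (k : ℕ)) *ᵥ g)
            = (fun i : ℕ => (H ^ i) *ᵥ g) '' Set.Iio m := by
          ext x
          constructor
          · rintro ⟨k, rfl⟩; exact ⟨k, k.isLt, rfl⟩
          · rintro ⟨i, hi, rfl⟩; exact ⟨⟨i, hi⟩, rfl⟩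
        rw [hrangeE] at h20
        have h21 : Module.finrank ℝ
            (Submodule.span ℝ ((fun i : ℕ => (H ^ i) *ᵥ g) '' Set.Iio m)) = min m gstar :=
          hgrade m
        rw [h20] at h21
        omega
      rw [Fintype.not_linearIndependent_iff] at hdep
      obtain ⟨l, hsum, k0, hk0⟩ := hdep
      have hcoef : ∀ i, c i * (∑ k : Fin m, l k * μ i ^ (k : ℕ)) = 0 := by
        intro i
        have h22 : ∑ k : Fin m, l k • ((H ^ (k : ℕ)) *ᵥ g)
            = ∑ i, (c i * ∑ k : Fin m, l k * μ i ^ (k : ℕ)) • u i := by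
          simp_rw [hHkg, Finset.smul_sum, smul_smul]
          rw [Finset.sum_comm]
          refine Finset.sum_congr rfl fun i _ => ?_
          rw [Finset.mul_sum, ← Finset.sum_smul]
          congr 1
          refine Finset.sum_congr rfl fun k _ => by ring
        rw [h22] at hsum
        have h23 := sum_smul_dot_basis u hortho
          (fun i => c i * ∑ k : Fin m, l k * μ i ^ (k : ℕ)) i
        rw [hsum, zero_dotProduct] at h23
        exact h23.symm
      set q : Polynomial ℝ := ∑ k : Fin m, Polynomial.C (l k) * Polynomial.X ^ (k : ℕ)
        with hqdef
      have hqeval : ∀ x : ℝ, q.eval x = ∑ k : Fin m, l k * x ^ (k : ℕ) := by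
        intro x
        rw [hqdef, Polynomial.eval_finset_sum]
        simp
      have hqne : q ≠ 0 := by
        intro h0
        have h24 : q.coeff k0 = l k0 := by
          rw [hqdef, Polynomial.finset_sum_coeff]
          simp_rw [Polynomial.coeff_C_mul, Polynomial.coeff_X_pow]
          rw [Finset.sum_eq_single k0]
          · simp
          · intro k _ hk
            have : ¬ ((k0 : ℕ) = (k : ℕ)) := fun h => hk (Fin.ext h.symm)
            simp [this]
          · intro h; exact absurd (Finset.mem_univ k0) h
        rw [h0] at h24
        simp at h24
        exact hk0 h24.symm
      have hroots : ∀ x ∈ E, q.eval x = 0 := by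
        intro x hx
        rw [hEdef] at hx
        obtain ⟨i, hi, rfl⟩ := Finset.mem_image.mp hx
        have hci := (Finset.mem_filter.mp hi).2
        rw [hqeval]
        rcases mul_eq_zero.mp (hcoef i) with h | h
        · exact absurd h hci
        · exact h
      have hqdeg : q.natDegree < m := by
        have hm0 : 0 < m := by omega
        rw [hqdef]
        refine lt_of_le_of_lt (Polynomial.natDegree_sum_le_of_forall_le _ _ (n := m - 1) ?_) ?_
        · intro k _
          refine le_trans Polynomial.natDegree_mul_le ?_
          simp only [Polynomial.natDegree_C, Polynomial.natDegree_X_pow, zero_add]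
          omega
        · omega
      have hsub : E ⊆ q.roots.toFinset := by
        intro x hx
        rw [Multiset.mem_toFinset, Polynomial.mem_roots']
        exact ⟨hqne, hroots x hx⟩
      have h25 := Finset.card_le_card hsub
      have h26 := Multiset.toFinset_card_le q.roots
      have h27 := Polynomial.card_roots' q
      omega
    set r : ℝ → ℝ := fun x => if x ≤ lamj then 1 else 0 with hrdef
    set p := Lagrange.interpolate E id r with hpdef
    have hpnode : ∀ i, c i ≠ 0 → p.eval (μ i) = (if μ i ≤ lamj then 1 else 0) := by
      intro i hi
      have h50 := Lagrange.eval_interpolate_at_node r (Set.injOn_id _) (hEmem i hi)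
      rw [hpdef]
      simpa [hrdef] using h50
    have hpdeg : p.natDegree < gstar := by
      by_cases hp0 : p = 0
      · rw [hp0]
        simpa using hgstar
      · rw [Polynomial.natDegree_lt_iff_degree_lt hp0]
        have h28 : p.degree < (E.card : WithBot ℕ) :=
          Lagrange.degree_interpolate_lt r (Set.injOn_id _)
        exact lt_of_lt_of_le h28 (by exact_mod_cast hcard)
    refine ⟨∑ i, (c i * p.eval (μ i)) • u i, ?_, ?_, ?_⟩
    · rw [htmin]; exact hz_mem p gstar hpdeg
    · intro h0
      have h10 := sum_smul_dot_basis u hortho (fun i => c i * p.eval (μ i)) i0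
      rw [h0, zero_dotProduct] at h10
      have h51 : c i0 * p.eval (μ i0) = 0 := h10.symm
      rw [hpnode i0 hci0, hμi0, if_pos le_rfl, mul_one] at h51
      exact hci0 h51
    · rw [hcurv]
      apply Finset.sum_nonpos
      intro i _
      by_cases hc0 : c i = 0
      · simp [hc0]
      · rw [hpnode i hc0]
        by_cases hle : μ i ≤ lamj
        · rw [if_pos hle]
          have h52 : μ i < 0 := lt_of_le_of_lt hle hjneg
          nlinarith [sq_nonneg (c i)]
        · rw [if_neg hle]
          simp
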